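/- Let n ≥ 1, l ∈ [0,2n], and 𝐚 = (a_1,…,a_l) a strictly increasing sequence of integers in [1,2n]. Suppose a_l is even and there exists r ∈ [0,l−1] such that a_{l−r} = a_l − r and a_{l−r} ∈ Rem(𝐚). Then a_{l−t} ∈ Rem(𝐚) for all t ∈ [0,r]. Moreover, if r is odd, then Rem(𝐚) = Rem(a_1,…,a_{l−r−1}) ⊔ [a_l − r, a_l] (disjoint union with the integer interval [a_l − r, a_l]). -/

import Mathlib

/-- `remAux` computes the set of removable entries of a strictly increasing
sequence, given as a list in *reversed* order (so the head is the last entry). -/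
def remAux : List ℕ → Finset ℕ
  | [] => ∅
  | [_] => ∅
  | b :: a :: rest =>
    if Even b ∧ a + 1 = b ∧ b + (remAux rest).card + 1 < 2 * (rest.length + 2) then
      insert a (insert b (remAux rest))
    else remAux (a :: rest)

/-- `remSet 𝐚` : the set `Rem(𝐚)` of removable entries of the strictly
increasing sequence `𝐚 = (a_1, …, a_l)` (given in its natural order). -/
def remSet (l : List ℕ) : Finset ℕ := remAux l.reverse

/-- `redSeq 𝐚` : the reduction `red(𝐚)`, i.e. `𝐚` with the removable entries
removed. -/
def redSeq (l : List ℕ) : List ℕ := l.filter (fun x => decide (x ∉ remSet l))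

lemma remAux_cons_cons (b a : ℕ) (rest : List ℕ) :
    remAux (b :: a :: rest) =
      if Even b ∧ a + 1 = b ∧ b + (remAux rest).card + 1 < 2 * (rest.length + 2) then
        insert a (insert b (remAux rest))
      else remAux (a :: rest) := rfl

lemma remAux_subset (L : List ℕ) : remAux L ⊆ L.toFinset := by
  induction L using remAux.induct with
  | case1 => simp [remAux]
  | case2 x => simp [remAux]
  | case3 b a rest hcond ih =>
      rw [remAux_cons_cons, if_pos hcond]
      intro x hx
      simp only [Finset.mem_insert] at hx
      simp only [List.toFinset_cons, Finset.mem_insert]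
      rcases hx with rfl | rfl | hx
      · tauto
      · tauto
      · have := ih hx; tauto
  | case4 b a rest hcond ih ih2 =>
      rw [remAux_cons_cons, if_neg hcond]
      intro x hx
      have := ih2 hx
      simp only [List.toFinset_cons, Finset.mem_insert] at this ⊢
      tauto

lemma remAux_odd_head (x : ℕ) (M : List ℕ) (hx : ¬ Even x) : remAux (x :: M) = remAux M := by
  cases M with
  | nil => simp [remAux]
  | cons d M' => rw [remAux_cons_cons, if_neg (by tauto)]

lemma pairwise_getD_add_le (L : List ℕ) (hp : L.Pairwise (· > ·)) :
    ∀ d i, i + d < L.length → L.getD (i + d) 0 + d ≤ L.getD i 0 := by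
  intro d
  induction d with
  | zero => intro i h; simp
  | succ d ih =>
    intro i h
    have h1 : L.getD (i + d + 1) 0 < L.getD (i + d) 0 := by
      rw [List.getD_eq_getElem _ _ (by omega), List.getD_eq_getElem _ _ (by omega)]
      exact List.pairwise_iff_getElem.mp hp _ _ (by omega) (by omega) (by omega)
    have h2 := ih i (by omega)
    have h3 : i + (d + 1) = i + d + 1 := by omega
    rw [h3]
    omega

lemma getD_linear (L : List ℕ) (hp : L.Pairwise (· > ·)) (r : ℕ) (hr : r < L.length)
    (hval : L.getD r 0 + r = L.getD 0 0) :
    ∀ t, t ≤ r → L.getD t 0 + t = L.getD 0 0 := by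
  intro t ht
  have h1 := pairwise_getD_add_le L hp t 0 (by omega)
  have h2 := pairwise_getD_add_le L hp (r - t) t (by omega)
  rw [show t + (r - t) = r from by omega] at h2
  simp only [Nat.zero_add] at h1
  omega

lemma mem_drop_lt (L : List ℕ) (hp : L.Pairwise (· > ·)) (k : ℕ) (hk : k < L.length) :
    ∀ x ∈ L.drop (k+1), x < L.getD k 0 := by
  intro x hx
  rw [List.mem_iff_getElem] at hx
  obtain ⟨i, hi, rfl⟩ := hx
  rw [List.getElem_drop, List.getD_eq_getElem _ _ hk]
  exact List.pairwise_iff_getElem.mp hp _ _ hk (by simp at hi; omega) (by omega)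

lemma main_lemma : ∀ r L, L.Pairwise (· > ·) → r < L.length → Even (L.getD 0 0) →
    L.getD r 0 + r = L.getD 0 0 → L.getD r 0 ∈ remAux L →
    (∀ t ≤ r, L.getD t 0 ∈ remAux L) ∧
    ((remAux L).card = (remAux (L.drop 2)).card + 2 ∧
      L.getD 0 0 + (remAux (L.drop 2)).card + 1 < 2 * L.length) ∧
    (Odd r → remAux L = remAux (L.drop (r+1)) ∪ Finset.Icc (L.getD 0 0 - r) (L.getD 0 0) ∧
      Disjoint (remAux (L.drop (r+1))) (Finset.Icc (L.getD 0 0 - r) (L.getD 0 0))) := by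
  intro r
  induction r using Nat.strong_induction_on with
  | _ r ih =>
  intro L hp hr heven hval hmem
  match L, hr with
  | [b], hr =>
      exfalso
      have hr0 : r = 0 := by simp at hr; omega
      subst hr0
      simp [remAux] at hmem
  | b :: c :: M, hr =>
  have hpcm : (c :: M).Pairwise (· > ·) := (List.pairwise_cons.mp hp).2
  have hpm : M.Pairwise (· > ·) := (List.pairwise_cons.mp hpcm).2
  have hlt : ∀ x ∈ c :: M, x < b := (List.pairwise_cons.mp hp).1
  have hltc : ∀ x ∈ M, x < c := (List.pairwise_cons.mp hpcm).1
  have hL0 : (b :: c :: M).getD 0 0 = b := rfl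
  have hevenb : Even b := by rwa [hL0] at heven
  have hlenL : (b :: c :: M).length = M.length + 2 := by simp
  have hd2 : (b :: c :: M).drop 2 = M := rfl
  have hdisjgen : Disjoint (remAux ((b::c::M).drop (r+1)))
      (Finset.Icc ((b::c::M).getD 0 0 - r) ((b::c::M).getD 0 0)) := by
    rw [Finset.disjoint_left]
    intro x hx hI
    have hx1 := remAux_subset _ hx
    rw [List.mem_toFinset] at hx1
    have hx2 := mem_drop_lt _ hp r hr x hx1
    rw [Finset.mem_Icc] at hI
    omega
  by_cases hC : Even b ∧ c + 1 = b ∧ b + (remAux M).card + 1 < 2 * (M.length + 2)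
  · -- pair removed at top
    have hEq : remAux (b :: c :: M) = insert c (insert b (remAux M)) := by
      rw [remAux_cons_cons, if_pos hC]
    have hbM : b ∉ remAux M := by
      intro hx
      have := hltc b (List.mem_toFinset.mp (remAux_subset M hx))
      omega
    have hcM : c ∉ remAux M := by
      intro hx
      have := hltc c (List.mem_toFinset.mp (remAux_subset M hx))
      omega
    have hcb : c ≠ b := by omega
    have hcard : (remAux (b :: c :: M)).card = (remAux M).card + 2 := by
      rw [hEq, Finset.card_insert_of_notMem (by simp [hcb, hcM]),
        Finset.card_insert_of_notMem hbM]
    have hpart2 : (remAux (b::c::M)).card = (remAux ((b::c::M).drop 2)).card + 2 ∧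
        (b::c::M).getD 0 0 + (remAux ((b::c::M).drop 2)).card + 1 < 2 * (b::c::M).length := by
      rw [hd2, hL0, hlenL]
      exact ⟨hcard, hC.2.2⟩
    obtain rfl | rfl | ⟨t, rfl⟩ : r = 0 ∨ r = 1 ∨ ∃ t, r = t + 2 := by
      rcases r with _ | _ | t
      · exact Or.inl rfl
      · exact Or.inr (Or.inl rfl)
      · exact Or.inr (Or.inr ⟨t, rfl⟩)
    · refine ⟨?_, hpart2, by simp [Nat.odd_iff]⟩
      intro t ht
      interval_cases t
      rw [hL0, hEq]
      simp
    · have hc1 : c + 1 = b := hC.2.1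
      refine ⟨?_, hpart2, ?_⟩
      · intro t ht
        interval_cases t
        · rw [hL0, hEq]; simp
        · show c ∈ remAux (b::c::M)
          rw [hEq]; simp
      · intro _
        rw [hL0]
        refine ⟨?_, by rw [hL0] at hdisjgen; exact hdisjgen⟩
        rw [hEq]
        show _ = remAux M ∪ _
        ext x
        simp only [Finset.mem_insert, Finset.mem_union, Finset.mem_Icc]
        constructor
        · rintro (rfl | rfl | hx)
          · right; omega
          · right; omega
          · left; exact hx
        · rintro (hx | hx)
          · right; right; exact hx
          · have : x = c ∨ x = b := by omega
            tauto
    · have hlin := getD_linear (b::c::M) hp (t+2) hr (by rw [hL0]; exact hval)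
      have hc1 : c + 1 = b := hC.2.1
      have h2' : M.getD 0 0 + 2 = b := by
        have := hlin 2 (by omega)
        simpa using this
      have hgetr : (b::c::M).getD (t+2) 0 = M.getD t 0 := rfl
      have hbr : M.getD t 0 + (t+2) = b := by rw [hgetr, hL0] at hval; exact hval
      have hmem' : M.getD t 0 ∈ remAux M := by
        rw [hgetr, hEq] at hmem
        rcases Finset.mem_insert.mp hmem with h | h
        · omega
        · rcases Finset.mem_insert.mp h with h | h
          · omega
          · exact h
      have hIH := ih t (by omega) M hpm (by omega)
        (by obtain ⟨k, hk⟩ := hevenb; exact ⟨k - 1, by omega⟩)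
        (by omega) hmem'
      obtain ⟨ihmem, ⟨ihcard, ihineq⟩, ihodd⟩ := hIH
      refine ⟨?_, hpart2, ?_⟩
      · intro s hs
        match s with
        | 0 => rw [hL0, hEq]; simp
        | 1 =>
            show c ∈ remAux (b::c::M)
            rw [hEq]; simp
        | (s+2) =>
            show M.getD s 0 ∈ remAux (b::c::M)
            rw [hEq]
            exact Finset.mem_insert_of_mem (Finset.mem_insert_of_mem (ihmem s (by omega)))
      · intro hodd
        have hodd' : Odd t := by
          obtain ⟨k, hk⟩ := hodd
          exact ⟨k - 1, by omega⟩
        obtain ⟨heq, _⟩ := ihodd hodd'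
        have hM0 : M.getD 0 0 = b - 2 := by omega
        rw [hM0] at heq
        have hdropeq : (b::c::M).drop (t+2+1) = M.drop (t+1) := rfl
        refine ⟨?_, by rw [hL0] at hdisjgen; exact hdisjgen⟩
        rw [hL0, hEq, hdropeq, heq]
        have hIcc : Finset.Icc (b - (t+2)) b
            = insert c (insert b (Finset.Icc (b - 2 - t) (b - 2))) := by
          ext x
          simp only [Finset.mem_Icc, Finset.mem_insert]
          omega
        rw [hIcc, Finset.union_insert, Finset.union_insert]
  · -- skipped at top : contradiction
    exfalso
    have hEq : remAux (b :: c :: M) = remAux (c :: M) := by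
      rw [remAux_cons_cons, if_neg hC]
    obtain rfl | ⟨t, rfl⟩ : r = 0 ∨ ∃ t, r = t + 1 := by
      rcases r with _ | t
      · exact Or.inl rfl
      · exact Or.inr ⟨t, rfl⟩
    · rw [hL0, hEq] at hmem
      have := hlt b (List.mem_toFinset.mp (remAux_subset _ hmem))
      omega
    · have hlin := getD_linear (b::c::M) hp (t+1) hr (by rw [hL0]; exact hval)
      have hc1 : c + 1 = b := by
        have := hlin 1 (by omega)
        simpa using this
      have hnI : ¬ (b + (remAux M).card + 1 < 2 * (M.length + 2)) := by
        intro hI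
        exact hC ⟨hevenb, hc1, hI⟩
      have hcodd : ¬ Even c := by
        intro hc
        rw [← hc1, Nat.even_add_one] at hevenb
        exact hevenb hc
      have hEq2 : remAux (c :: M) = remAux M := remAux_odd_head c M hcodd
      have hmem' : (b::c::M).getD (t+1) 0 ∈ remAux M := by
        rw [← hEq2, ← hEq]; exact hmem
      obtain rfl | ⟨s, rfl⟩ : t = 0 ∨ ∃ s, t = s + 1 := by
        rcases t with _ | s
        · exact Or.inl rfl
        · exact Or.inr ⟨s, rfl⟩
      · have hgc : (b::c::M).getD 1 0 = c := rfl
        rw [hgc] at hmem'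
        have := hltc c (List.mem_toFinset.mp (remAux_subset _ hmem'))
        omega
      · have h2' : M.getD 0 0 + 2 = b := by
          have := hlin 2 (by omega)
          simpa using this
        have hgetr : (b::c::M).getD (s+2) 0 = M.getD s 0 := rfl
        have hbr : M.getD s 0 + (s + 2) = b := by
          have hv := hval
          rw [hgetr, hL0] at hv
          exact hv
        have hmem'' : M.getD s 0 ∈ remAux M := by rw [hgetr] at hmem'; exact hmem'
        have hIH := ih s (by omega) M hpm (by omega)
          (by obtain ⟨k, hk⟩ := hevenb; exact ⟨k - 1, by omega⟩)
          (by omega) hmem''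
        obtain ⟨_, ⟨ihcard, ihineq⟩, _⟩ := hIH
        apply hnI
        omega

theorem stmt7 (n : ℕ) (hn : 1 ≤ n) (a : List ℕ)
    (hinc : a.Chain' (· < ·)) (hbd : ∀ x ∈ a, 1 ≤ x ∧ x ≤ 2 * n)
    (hlen : a.length ≤ 2 * n) (h : a ≠ [])
    (heven : Even (a.getLast h)) (r : ℕ) (hr : r ≤ a.length - 1)
    (hval : a.getD (a.length - r - 1) 0 + r = a.getLast h)
    (hmem : a.getD (a.length - r - 1) 0 ∈ remSet a) :
    (∀ t ≤ r, a.getD (a.length - t - 1) 0 ∈ remSet a) ∧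
    (Odd r →
      remSet a =
        remSet (a.take (a.length - r - 1)) ∪
          Finset.Icc (a.getLast h - r) (a.getLast h) ∧
      Disjoint (remSet (a.take (a.length - r - 1)))
        (Finset.Icc (a.getLast h - r) (a.getLast h))) := by
  have hlen0 : 0 < a.length := List.length_pos_iff.mpr h
  have hrl : r < a.length := by omega
  have hp0 : a.Pairwise (· < ·) := List.isChain_iff_pairwise.mp hinc
  have hpL : a.reverse.Pairwise (· > ·) := List.pairwise_reverse.mpr hp0
  have hLlen : a.reverse.length = a.length := List.length_reverse
  have hget : ∀ t, t < a.length → a.reverse.getD t 0 = a.getD (a.length - t - 1) 0 := by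
    intro t ht
    rw [List.getD_eq_getElem _ _ (by rw [hLlen]; exact ht),
      List.getD_eq_getElem _ _ (by omega), List.getElem_reverse]
    simp only [show a.length - 1 - t = a.length - t - 1 from by omega]
  have hgetLast : a.getLast h = a.reverse.getD 0 0 := by
    rw [List.getLast_eq_getElem, List.getD_eq_getElem _ _ (by rw [hLlen]; omega),
      List.getElem_reverse]
    simp only [Nat.sub_zero]
  have hrem : remSet a = remAux a.reverse := rfl
  have hval' : a.reverse.getD r 0 + r = a.reverse.getD 0 0 := by
    rw [hget r hrl, ← hgetLast]; exact hval
  have hmem' : a.reverse.getD r 0 ∈ remAux a.reverse := by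
    rw [hget r hrl, ← hrem]; exact hmem
  obtain ⟨Hmem, _, Hodd⟩ := main_lemma r a.reverse hpL (by rw [hLlen]; exact hrl)
    (hgetLast ▸ heven) hval' hmem'
  constructor
  · intro t ht
    have := Hmem t ht
    rw [hget t (by omega)] at this
    rw [hrem]
    exact this
  · intro hodd
    obtain ⟨heq, hdisj⟩ := Hodd hodd
    have htake : (a.take (a.length - r - 1)).reverse = a.reverse.drop (r+1) := by
      rw [List.reverse_take]
      congr 1
      omega
    have hremtake : remSet (a.take (a.length - r - 1)) = remAux (a.reverse.drop (r+1)) := by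
      rw [remSet, htake]
    constructor
    · rw [hrem, hremtake, hgetLast]
      exact heq
    · rw [hremtake, hgetLast]
      exact hdisj
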